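/- Let d ∈ ℕ, d ≥ 1, let α > 9/2 be real, and let v̂ : ℤ^d → ℂ satisfy ‖v̂‖_α := (Σ_{h ∈ ℤ^d} |v̂(h)|² r_α(h)²)^{1/2} < ∞. Then Σ_{h ∈ ℤ^d} ‖h‖₂⁴ |v̂(h)| ≤ d² · (1 + 2ζ(2α − 8))^{d/2} · ‖v̂‖_α, where ‖h‖₂ is the Euclidean norm of h; in particular the left-hand side is finite. -/

import Mathlib

noncomputable section

/-- The squared Korobov weight `r_α(h)² = ∏_j max(|h_j|^(2α), 1)`. -/
def korWeightSq {d : ℕ} (α : ℝ) (h : Fin d → ℤ) : ℝ :=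
  ∏ j, max (|(h j : ℝ)| ^ (2 * α)) 1

/-- The squared Euclidean norm `‖h‖₂² = Σ_j h_j²` of `h ∈ ℤ^d`. -/
def normSq {d : ℕ} (h : Fin d → ℤ) : ℝ := ∑ j, (h j : ℝ) ^ 2

/-- The Riemann zeta function at a real argument `s`, `ζ(s) = Σ_{m ≥ 1} m^{-s}`. -/
def zetaR (s : ℝ) : ℝ := ∑' m : ℕ, 1 / ((m : ℝ) + 1) ^ s

lemma zetaR_nonneg (s : ℝ) : 0 ≤ zetaR s :=
  tsum_nonneg fun m => by positivity

lemma zetaR_summable {s : ℝ} (hs : 1 < s) :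
    Summable fun m : ℕ => 1 / ((m : ℝ) + 1) ^ s := by
  have h : Summable fun m : ℕ => ((m : ℝ) + 1) ^ (-s) := by
    have := (Real.summable_nat_rpow (p := -s)).2 (by linarith)
    have h2 := (summable_nat_add_iff (f := fun m : ℕ => (m : ℝ) ^ (-s)) 1).2 this
    refine h2.congr fun m => ?_
    push_cast
    ring_nf
  refine h.congr fun m => ?_
  rw [Real.rpow_neg (by positivity), one_div]

lemma zetaR_le {a b : ℝ} (ha : 1 < a) (hab : a ≤ b) : zetaR b ≤ zetaR a := by
  refine Summable.tsum_le_tsum (fun m => ?_) (zetaR_summable (lt_of_lt_of_le ha hab)) (zetaR_summable ha)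
  apply one_div_le_one_div_of_le (by positivity)
  exact Real.rpow_le_rpow_of_exponent_le (by linarith [Nat.cast_nonneg (α := ℝ) m]) hab

lemma hasSum_int_abs_rpow {s : ℝ} (hs : 1 < s) :
    HasSum (fun n : ℤ => |(n : ℝ)| ^ (-s)) (2 * zetaR s) := by
  have hnat : Summable fun n : ℕ => |((n : ℤ) : ℝ)| ^ (-s) := by
    exact (Real.summable_abs_int_rpow hs).comp_injective
      (i := fun n : ℕ => (n : ℤ)) (fun a b h => by simpa using h)
  have hneg : Summable fun n : ℕ => |((-((n : ℤ) + 1) : ℤ) : ℝ)| ^ (-s) := by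
    exact (Real.summable_abs_int_rpow hs).comp_injective
      (i := fun n : ℕ => (-((n : ℤ) + 1) : ℤ)) (fun a b h => by simpa using h)
  have key : ∀ n : ℕ, |((-((n : ℤ) + 1) : ℤ) : ℝ)| ^ (-s) = 1 / ((n : ℝ) + 1) ^ s := by
    intro n
    rw [show |((-((n : ℤ) + 1) : ℤ) : ℝ)| = (n : ℝ) + 1 by
      push_cast; rw [abs_neg, abs_of_nonneg]; positivity]
    rw [Real.rpow_neg (by positivity), one_div]
  have hsummable : Summable fun n : ℤ => |(n : ℝ)| ^ (-s) := Real.summable_abs_int_rpow hs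
  have htsum := tsum_of_nat_of_neg_add_one (f := fun n : ℤ => |(n : ℝ)| ^ (-s)) hnat hneg
  have h1 : ∑' n : ℕ, |((n : ℤ) : ℝ)| ^ (-s) = zetaR s := by
    rw [Summable.tsum_eq_zero_add hnat]
    norm_num [Real.zero_rpow (show -s ≠ 0 by linarith)]
    refine tsum_congr fun n => ?_
    rw [show |(n : ℝ) + 1| = (n : ℝ) + 1 from abs_of_nonneg (by positivity)]
    rw [Real.rpow_neg (by positivity), one_div]
  have h2 : ∑' n : ℕ, |((-((n : ℤ) + 1) : ℤ) : ℝ)| ^ (-s) = zetaR s := tsum_congr key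
  have heq : ∑' n : ℤ, |(n : ℝ)| ^ (-s) = 2 * zetaR s := by
    rw [htsum, h1, h2]; ring
  exact heq ▸ hsummable.hasSum

/-- one-dimensional weight -/

def w1 (α : ℝ) (n : ℤ) : ℝ := max (|(n : ℝ)| ^ (2 * α)) 1

lemma w1_pos (α : ℝ) (n : ℤ) : 0 < w1 α n := lt_of_lt_of_le one_pos (le_max_right _ _)

lemma w1_one_le (α : ℝ) (n : ℤ) : 1 ≤ w1 α n := le_max_right _ _

lemma w1_ne_zero (α : ℝ) (hα : 9 / 2 < α) (n : ℤ) (hn : n ≠ 0) :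
    w1 α n = |(n : ℝ)| ^ (2 * α) := by
  apply max_eq_left
  apply Real.one_le_rpow ?_ (by linarith)
  rw [← Int.cast_abs]
  exact_mod_cast Int.one_le_abs hn

lemma hasSum_one_div_w1 {α : ℝ} (hα : 9 / 2 < α) :
    HasSum (fun n : ℤ => 1 / w1 α n) (1 + 2 * zetaR (2 * α)) := by
  have h1 : HasSum (fun n : ℤ => if n = 0 then (1:ℝ) else 0) 1 := hasSum_ite_eq 0 1
  have h2 : HasSum (fun n : ℤ => |(n : ℝ)| ^ (-(2 * α))) (2 * zetaR (2 * α)) :=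
    hasSum_int_abs_rpow (by linarith)
  have := h1.add h2
  refine this.congr_fun fun n => ?_
  by_cases hn : n = 0
  · subst hn
    simp [w1, Real.zero_rpow (show 2 * α ≠ 0 by linarith),
      Real.zero_rpow (show -(2*α) ≠ 0 by linarith)]
  · rw [if_neg hn, zero_add, w1_ne_zero α hα n hn, Real.rpow_neg (abs_nonneg _), one_div]

lemma hasSum_pow8_div_w1 {α : ℝ} (hα : 9 / 2 < α) :
    HasSum (fun n : ℤ => ((n : ℝ)) ^ (8:ℕ) / w1 α n) (2 * zetaR (2 * α - 8)) := by
  have h2 : HasSum (fun n : ℤ => |(n : ℝ)| ^ (-(2 * α - 8))) (2 * zetaR (2 * α - 8)) :=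
    hasSum_int_abs_rpow (by linarith)
  refine h2.congr_fun fun n => ?_
  by_cases hn : n = 0
  · subst hn
    simp [Real.zero_rpow (show -(2*α-8) ≠ 0 by linarith),
      Real.zero_rpow (show (8:ℝ)-2*α ≠ 0 by linarith)]
  · have habs : (0:ℝ) < |(n:ℝ)| := by
      have : (n:ℝ) ≠ 0 := Int.cast_ne_zero.mpr hn
      positivity
    rw [w1_ne_zero α hα n hn,
      show ((n:ℝ)) ^ (8:ℕ) = |(n:ℝ)| ^ ((8:ℕ):ℝ) by
        rw [Real.rpow_natCast, ← abs_pow, abs_of_nonneg (by positivity)],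
      ← Real.rpow_sub habs]
    norm_num

lemma sum_one_div_w1_le {α : ℝ} (hα : 9 / 2 < α) :
    ∑' n : ℤ, 1 / w1 α n ≤ 1 + 2 * zetaR (2 * α - 8) := by
  rw [(hasSum_one_div_w1 hα).tsum_eq]
  have := zetaR_le (a := 2 * α - 8) (b := 2 * α) (by linarith) (by linarith)
  linarith

lemma sum_pow8_div_w1_le {α : ℝ} (hα : 9 / 2 < α) :
    ∑' n : ℤ, ((n : ℝ)) ^ (8:ℕ) / w1 α n ≤ 1 + 2 * zetaR (2 * α - 8) := by
  rw [(hasSum_pow8_div_w1 hα).tsum_eq]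
  linarith

lemma pi_prod_sum {d : ℕ} (f : Fin d → ℤ → ℝ) (h0 : ∀ j n, 0 ≤ f j n)
    (hs : ∀ j, Summable (f j)) :
    Summable (fun x : Fin d → ℤ => ∏ j, f j (x j)) ∧
      (∑' x : Fin d → ℤ, ∏ j, f j (x j)) = ∏ j, ∑' n : ℤ, f j n := by
  induction d with
  | zero =>
    have huniq : ∀ x : Fin 0 → ℤ, (∏ j, f j (x j)) = 1 := fun x => by simp
    have h : HasSum (fun x : Fin 0 → ℤ => ∏ j, f j (x j)) 1 := by
      have := hasSum_single (f := fun x : Fin 0 → ℤ => ∏ j, f j (x j))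
        (fun _ => 0) (fun b hb => absurd (Subsingleton.elim b _) hb)
      simpa [huniq] using this
    exact ⟨h.summable, by simp [h.tsum_eq]⟩
  | succ d ih =>
    obtain ⟨ihs, ihe⟩ := ih (fun j => f j.succ) (fun j n => h0 _ n) (fun j => hs _)
    set G : (Fin d → ℤ) → ℝ := fun y => ∏ j, f j.succ (y j) with hG
    have hG0 : ∀ y, 0 ≤ G y := fun y => Finset.prod_nonneg fun j _ => h0 _ _
    have hprod : Summable (fun p : ℤ × (Fin d → ℤ) => f 0 p.1 * G p.2) :=
      (hs 0).mul_of_nonneg ihs (fun n => h0 0 n) hG0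
    set e := Fin.consEquiv (fun _ : Fin (d + 1) => ℤ) with he
    have key : ∀ p : ℤ × (Fin d → ℤ),
        (∏ j, f j (e p j)) = f 0 p.1 * G p.2 := by
      intro p
      rw [Fin.prod_univ_succ]
      simp [he, Fin.consEquiv]
      exact Or.inl rfl
    have hsummable : Summable (fun x : Fin (d + 1) → ℤ => ∏ j, f j (x j)) := by
      rw [← e.summable_iff]
      exact hprod.congr fun p => (key p).symm
    refine ⟨hsummable, ?_⟩
    have h1 : (∑' x : Fin (d + 1) → ℤ, ∏ j, f j (x j))
        = ∑' p : ℤ × (Fin d → ℤ), f 0 p.1 * G p.2 := by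
      rw [← e.tsum_eq]
      exact tsum_congr key
    rw [h1, Summable.tsum_prod' hprod (fun a => (ihs.mul_left (f 0 a)))]
    simp_rw [tsum_mul_left, tsum_mul_right]
    rw [Fin.prod_univ_succ, ihe]

lemma tsum_cauchy_schwarz {ι : Type*} (f g : ι → ℝ) (hf0 : ∀ i, 0 ≤ f i) (hg0 : ∀ i, 0 ≤ g i)
    (hf : Summable fun i => f i ^ 2) (hg : Summable fun i => g i ^ 2) :
    Summable (fun i => f i * g i) ∧
      ∑' i, f i * g i ≤ Real.sqrt (∑' i, f i ^ 2) * Real.sqrt (∑' i, g i ^ 2) := by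
  have bound : ∀ s : Finset ι, ∑ i ∈ s, f i * g i ≤
      Real.sqrt (∑' i, f i ^ 2) * Real.sqrt (∑' i, g i ^ 2) := by
    intro s
    refine (Real.sum_mul_le_sqrt_mul_sqrt s f g).trans ?_
    gcongr
    · exact Summable.sum_le_tsum s (fun i _ => sq_nonneg _) hf
    · exact Summable.sum_le_tsum s (fun i _ => sq_nonneg _) hg
  have hsummable : Summable (fun i => f i * g i) :=
    summable_of_sum_le (fun i => mul_nonneg (hf0 i) (hg0 i)) bound
  exact ⟨hsummable, Summable.tsum_le_of_sum_le hsummable bound⟩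

lemma normSq_nonneg {d : ℕ} (h : Fin d → ℤ) : 0 ≤ normSq h :=
  Finset.sum_nonneg fun j _ => sq_nonneg _

/-- **Weighted summability of Korobov coefficients (second order).** For
`α > 9/2` and `‖v̂‖_α < ∞`,
`Σ_h ‖h‖₂⁴ |v̂(h)| ≤ d² (1 + 2ζ(2α−8))^{d/2} ‖v̂‖_α`; in particular the
left-hand side is finite. -/
theorem korobov_weighted_sum_fourth
    (d : ℕ) (hd : 1 ≤ d) (α : ℝ) (hα : 9 / 2 < α)
    (vhat : (Fin d → ℤ) → ℂ)
    (hsum : Summable fun h : Fin d → ℤ => ‖vhat h‖ ^ 2 * korWeightSq α h) :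
    Summable (fun h : Fin d → ℤ => normSq h ^ 2 * ‖vhat h‖) ∧
    ∑' h : Fin d → ℤ, normSq h ^ 2 * ‖vhat h‖ ≤
      (d : ℝ) ^ 2 * (1 + 2 * zetaR (2 * α - 8)) ^ ((d : ℝ) / 2) *
        Real.sqrt (∑' h : Fin d → ℤ, ‖vhat h‖ ^ 2 * korWeightSq α h) := by
  have hC0 : (0:ℝ) ≤ 1 + 2 * zetaR (2 * α - 8) := by
    have := zetaR_nonneg (2 * α - 8); linarith
  set C : ℝ := 1 + 2 * zetaR (2 * α - 8) with hC
  have hw1 : ∀ h : Fin d → ℤ, (1:ℝ) ≤ korWeightSq α h := fun h => by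
    rw [show korWeightSq α h = ∏ j, w1 α (h j) from rfl]
    calc (1:ℝ) = ∏ _j : Fin d, 1 := by rw [Finset.prod_const_one]
      _ ≤ ∏ j, w1 α (h j) :=
        Finset.prod_le_prod (fun i _ => zero_le_one) (fun i _ => w1_one_le α (h i))
  have hw0 : ∀ h : Fin d → ℤ, (0:ℝ) < korWeightSq α h := fun h =>
    lt_of_lt_of_le one_pos (hw1 h)
  set F : (Fin d → ℤ) → ℝ := fun h => normSq h ^ 2 / Real.sqrt (korWeightSq α h) with hF
  set G : (Fin d → ℤ) → ℝ := fun h => ‖vhat h‖ * Real.sqrt (korWeightSq α h) with hGdef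
  have hF0 : ∀ h, 0 ≤ F h := fun h =>
    div_nonneg (pow_nonneg (normSq_nonneg h) 2) (Real.sqrt_nonneg _)
  have hG0 : ∀ h, 0 ≤ G h := fun h => mul_nonneg (norm_nonneg _) (Real.sqrt_nonneg _)
  have hFG : ∀ h, F h * G h = normSq h ^ 2 * ‖vhat h‖ := by
    intro h
    have hsne : Real.sqrt (korWeightSq α h) ≠ 0 := ne_of_gt (Real.sqrt_pos.2 (hw0 h))
    rw [hF, hGdef]
    field_simp
  have hG2 : ∀ h, G h ^ 2 = ‖vhat h‖ ^ 2 * korWeightSq α h := fun h => by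
    rw [hGdef, mul_pow, Real.sq_sqrt (hw0 h).le]
  -- sums of T j
  have hT : ∀ j : Fin d,
      Summable (fun h : Fin d → ℤ => ((h j : ℝ)) ^ (8:ℕ) / korWeightSq α h) ∧
      (∑' h : Fin d → ℤ, ((h j : ℝ)) ^ (8:ℕ) / korWeightSq α h) ≤ C ^ d := by
    intro j
    set fk : Fin d → ℤ → ℝ := fun k n => (if k = j then (n:ℝ) ^ (8:ℕ) else 1) / w1 α n with hfk
    have hfk0 : ∀ k n, 0 ≤ fk k n := by
      intro k n
      simp only [hfk]
      exact div_nonneg (by split <;> positivity) (w1_pos α n).le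
    have hfks : ∀ k, Summable (fk k) := by
      intro k
      by_cases hkj : k = j
      · subst hkj
        exact ((hasSum_pow8_div_w1 hα).summable).congr fun n => by simp [hfk]
      · exact ((hasSum_one_div_w1 hα).summable).congr fun n => by simp [hfk, if_neg hkj]
    have hkey : ∀ h : Fin d → ℤ, (∏ k, fk k (h k)) = ((h j : ℝ)) ^ (8:ℕ) / korWeightSq α h := by
      intro h
      rw [show korWeightSq α h = ∏ k, w1 α (h k) from rfl, hfk]
      rw [Finset.prod_div_distrib]
      congr 1
      simp
    obtain ⟨hsum', heq'⟩ := pi_prod_sum fk hfk0 hfks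
    refine ⟨hsum'.congr hkey, ?_⟩
    rw [← tsum_congr hkey, heq']
    calc (∏ k, ∑' n : ℤ, fk k n) ≤ ∏ _k : Fin d, C := by
          refine Finset.prod_le_prod (fun k _ => tsum_nonneg fun n => hfk0 k n) fun k _ => ?_
          by_cases hkj : k = j
          · subst hkj
            refine le_trans (le_of_eq (tsum_congr fun n => by simp [hfk])) (sum_pow8_div_w1_le hα)
          · refine le_trans (le_of_eq (tsum_congr fun n => by simp [hfk, if_neg hkj]))
              (sum_one_div_w1_le hα)
      _ = C ^ d := by rw [Finset.prod_const, Finset.card_univ, Fintype.card_fin]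
  -- pointwise bound on F^2
  have hF2 : ∀ h, F h ^ 2 = normSq h ^ 4 / korWeightSq α h := by
    intro h
    rw [hF]
    rw [div_pow, Real.sq_sqrt (hw0 h).le, ← pow_mul]
  have hbound : ∀ h, F h ^ 2 ≤ (d:ℝ) ^ 3 * ∑ j, ((h j : ℝ)) ^ (8:ℕ) / korWeightSq α h := by
    intro h
    rw [hF2]
    have hcard : ((Finset.univ : Finset (Fin d)).card : ℝ) = (d : ℝ) := by
      rw [Finset.card_univ, Fintype.card_fin]
    have e1 : normSq h ^ 2 ≤ (d:ℝ) * ∑ j, ((h j : ℝ) ^ 2) ^ 2 := by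
      have := sq_sum_le_card_mul_sum_sq (s := (Finset.univ : Finset (Fin d)))
        (f := fun j => (h j : ℝ) ^ 2)
      rw [hcard] at this
      exact this
    have e2 : (∑ j, ((h j : ℝ) ^ 2) ^ 2) ^ 2 ≤ (d:ℝ) * ∑ j, (((h j : ℝ) ^ 2) ^ 2) ^ 2 := by
      have := sq_sum_le_card_mul_sum_sq (s := (Finset.univ : Finset (Fin d)))
        (f := fun j => ((h j : ℝ) ^ 2) ^ 2)
      rw [hcard] at this
      exact this
    have h4 : normSq h ^ 4 ≤ (d:ℝ) ^ 3 * ∑ j, ((h j : ℝ)) ^ (8:ℕ) := by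
      calc normSq h ^ 4 = (normSq h ^ 2) ^ 2 := by ring
        _ ≤ ((d:ℝ) * ∑ j, ((h j : ℝ) ^ 2) ^ 2) ^ 2 := by
            exact pow_le_pow_left₀ (sq_nonneg _) e1 2
        _ = (d:ℝ) ^ 2 * (∑ j, ((h j : ℝ) ^ 2) ^ 2) ^ 2 := by ring
        _ ≤ (d:ℝ) ^ 2 * ((d:ℝ) * ∑ j, (((h j : ℝ) ^ 2) ^ 2) ^ 2) := by
            exact mul_le_mul_of_nonneg_left e2 (by positivity)
        _ = (d:ℝ) ^ 3 * ∑ j, ((h j : ℝ)) ^ (8:ℕ) := by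
            rw [show (fun j => (((h j : ℝ) ^ 2) ^ 2) ^ 2) = fun j => ((h j : ℝ)) ^ (8:ℕ) by
              funext j; ring]
            ring
    calc normSq h ^ 4 / korWeightSq α h ≤ ((d:ℝ) ^ 3 * ∑ j, ((h j:ℝ)) ^ (8:ℕ)) / korWeightSq α h :=
          (div_le_div_iff_of_pos_right (hw0 h)).mpr h4
      _ = (d:ℝ) ^ 3 * ∑ j, ((h j : ℝ)) ^ (8:ℕ) / korWeightSq α h := by
          rw [mul_div_assoc, Finset.sum_div]
  have hTsum : Summable (fun h : Fin d → ℤ => ∑ j, ((h j : ℝ)) ^ (8:ℕ) / korWeightSq α h) :=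
    summable_sum fun j _ => (hT j).1
  have hF2sum : Summable (fun h => F h ^ 2) :=
    Summable.of_nonneg_of_le (fun h => sq_nonneg _) hbound (hTsum.mul_left _)
  have hF2le : ∑' h : Fin d → ℤ, F h ^ 2 ≤ (d:ℝ) ^ 4 * C ^ d := by
    calc ∑' h : Fin d → ℤ, F h ^ 2
        ≤ ∑' h : Fin d → ℤ, (d:ℝ) ^ 3 * ∑ j, ((h j : ℝ)) ^ (8:ℕ) / korWeightSq α h :=
          Summable.tsum_le_tsum hbound hF2sum (hTsum.mul_left _)
      _ = (d:ℝ) ^ 3 * ∑ j : Fin d, ∑' h : Fin d → ℤ, ((h j : ℝ)) ^ (8:ℕ) / korWeightSq α h := by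
          rw [tsum_mul_left, Summable.tsum_finsetSum fun j _ => (hT j).1]
      _ ≤ (d:ℝ) ^ 3 * ∑ _j : Fin d, C ^ d := by
          refine mul_le_mul_of_nonneg_left (Finset.sum_le_sum fun j _ => (hT j).2) (by positivity)
      _ = (d:ℝ) ^ 4 * C ^ d := by
          rw [Finset.sum_const, Finset.card_univ, Fintype.card_fin, nsmul_eq_mul]
          ring
  have hG2sum : Summable (fun h => G h ^ 2) := hsum.congr fun h => (hG2 h).symm
  obtain ⟨hs1, hs2⟩ := tsum_cauchy_schwarz F G hF0 hG0 hF2sum hG2sum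
  constructor
  · exact hs1.congr hFG
  · have e1 : (∑' h : Fin d → ℤ, normSq h ^ 2 * ‖vhat h‖) = ∑' h : Fin d → ℤ, F h * G h :=
      tsum_congr fun h => (hFG h).symm
    have e2 : (∑' h : Fin d → ℤ, G h ^ 2) = ∑' h : Fin d → ℤ, ‖vhat h‖ ^ 2 * korWeightSq α h :=
      tsum_congr hG2
    rw [e1, ← e2]
    refine hs2.trans (mul_le_mul_of_nonneg_right ?_ (Real.sqrt_nonneg _))
    calc Real.sqrt (∑' h : Fin d → ℤ, F h ^ 2) ≤ Real.sqrt ((d:ℝ) ^ 4 * C ^ d) :=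
          Real.sqrt_le_sqrt hF2le
      _ = (d:ℝ) ^ 2 * C ^ ((d:ℝ) / 2) := by
          rw [Real.sqrt_mul (by positivity)]
          congr 1
          · rw [show ((d:ℝ) ^ 4) = ((d:ℝ) ^ 2) ^ 2 by ring, Real.sqrt_sq (by positivity)]
          · rw [Real.sqrt_eq_rpow, ← Real.rpow_natCast C d, ← Real.rpow_mul hC0]
            congr 1
            ring

end
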